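/- Let k and k̃ be kernels on a set X whose RKHSs are equal as sets with C-equivalent norms (C⁻¹‖f‖_{H_k} ≤ ‖f‖_{H_{k̃}} ≤ C‖f‖_{H_k}). Then for any points x_1,…,x_n, the kernel matrices k(X,X) and k̃(X,X) are C²-equivalent, i.e., C⁻² λ_i(k(X,X)) ≤ λ_i(k̃(X,X)) ≤ C² λ_i(k(X,X)) for all i. -/

import Mathlib

open Matrix

section Aux

variable {n : ℕ}

private lemma toEuclideanLin_eig {A : Matrix (Fin n) (Fin n) ℝ} (hA : A.IsHermitian) (l : Fin n) :
    Matrix.toEuclideanLin A (hA.eigenvectorBasis l)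
      = hA.eigenvalues l • hA.eigenvectorBasis l := by
  apply (WithLp.equiv 2 (Fin n → ℝ)).injective
  rw [WithLp.equiv_apply, WithLp.equiv_apply, Matrix.ofLp_toEuclideanLin_apply, hA.mulVec_eigenvectorBasis, WithLp.ofLp_smul]

private lemma quad_expand {A : Matrix (Fin n) (Fin n) ℝ} (hA : A.IsHermitian)
    (v : EuclideanSpace ℝ (Fin n)) :
    (inner ℝ v (Matrix.toEuclideanLin A v) : ℝ)
      = ∑ l, hA.eigenvalues l * (inner ℝ (hA.eigenvectorBasis l) v : ℝ) ^ 2 := by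
  have hsym := (Matrix.isHermitian_iff_isSymmetric).1 hA
  rw [← OrthonormalBasis.sum_inner_mul_inner hA.eigenvectorBasis v (Matrix.toEuclideanLin A v)]
  refine Finset.sum_congr rfl fun l _ => ?_
  have h1 : (inner ℝ (hA.eigenvectorBasis l) (Matrix.toEuclideanLin A v) : ℝ)
      = hA.eigenvalues l * inner ℝ (hA.eigenvectorBasis l) v := by
    rw [← hsym (hA.eigenvectorBasis l) v, toEuclideanLin_eig hA l, real_inner_smul_left]
  rw [h1, real_inner_comm v]; ring

private lemma parseval' {A : Matrix (Fin n) (Fin n) ℝ} (hA : A.IsHermitian)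
    (v : EuclideanSpace ℝ (Fin n)) :
    (inner ℝ v v : ℝ) = ∑ l, (inner ℝ (hA.eigenvectorBasis l) v : ℝ) ^ 2 := by
  rw [← OrthonormalBasis.sum_inner_mul_inner hA.eigenvectorBasis v v]
  exact Finset.sum_congr rfl fun l _ => by rw [real_inner_comm v]; ring

private lemma inner_eq_zero_of_mem_span {ι E : Type*} [NormedAddCommGroup E]
    [InnerProductSpace ℝ E] {b : ι → E} (hb : Orthonormal ℝ b) {s : Set ι} {v : E}
    (hv : v ∈ Submodule.span ℝ (b '' s)) {m : ι} (hm : m ∉ s) :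
    (inner ℝ (b m) v : ℝ) = 0 := by
  induction hv using Submodule.span_induction with
  | mem x hx =>
    obtain ⟨l, hl, rfl⟩ := hx
    exact hb.2 (fun h => hm (h ▸ hl))
  | zero => exact inner_zero_right _
  | add x y _ _ hx hy => rw [inner_add_right, hx, hy, add_zero]
  | smul a x _ hx => rw [real_inner_smul_right, hx, mul_zero]

private lemma quad_lower {A : Matrix (Fin n) (Fin n) ℝ} (hA : A.IsHermitian)
    (s : Finset (Fin n)) (μ : ℝ) (hμ : ∀ m ∈ s, μ ≤ hA.eigenvalues m)
    {v : EuclideanSpace ℝ (Fin n)}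
    (hv : v ∈ Submodule.span ℝ (hA.eigenvectorBasis '' ↑s)) :
    μ * (inner ℝ v v : ℝ) ≤ (inner ℝ v (Matrix.toEuclideanLin A v) : ℝ) := by
  rw [quad_expand hA v, parseval' hA v, Finset.mul_sum]
  refine Finset.sum_le_sum fun l _ => ?_
  by_cases hl : l ∈ s
  · exact mul_le_mul_of_nonneg_right (hμ l hl) (sq_nonneg _)
  · rw [inner_eq_zero_of_mem_span hA.eigenvectorBasis.orthonormal hv hl]
    simp

private lemma quad_upper {A : Matrix (Fin n) (Fin n) ℝ} (hA : A.IsHermitian)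
    (s : Finset (Fin n)) (μ : ℝ) (hμ : ∀ m ∈ s, hA.eigenvalues m ≤ μ)
    {v : EuclideanSpace ℝ (Fin n)}
    (hv : v ∈ Submodule.span ℝ (hA.eigenvectorBasis '' ↑s)) :
    (inner ℝ v (Matrix.toEuclideanLin A v) : ℝ) ≤ μ * (inner ℝ v v : ℝ) := by
  rw [quad_expand hA v, parseval' hA v, Finset.mul_sum]
  refine Finset.sum_le_sum fun l _ => ?_
  by_cases hl : l ∈ s
  · exact mul_le_mul_of_nonneg_right (hμ l hl) (sq_nonneg _)
  · rw [inner_eq_zero_of_mem_span hA.eigenvectorBasis.orthonormal hv hl]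
    simp

private lemma finrank_span_orthonormal {E : Type*} [NormedAddCommGroup E]
    [InnerProductSpace ℝ E] {b : Fin n → E} (hb : Orthonormal ℝ b) (s : Finset (Fin n)) :
    Module.finrank ℝ (Submodule.span ℝ (b '' ↑s)) = s.card := by
  have hli : LinearIndependent ℝ (fun l : s => b l) :=
    hb.linearIndependent.comp Subtype.val Subtype.val_injective
  have himg : b '' ↑s = Set.range (fun l : s => b l) := by
    ext y
    constructor
    · rintro ⟨l, hl, rfl⟩; exact ⟨⟨l, hl⟩, rfl⟩
    · rintro ⟨⟨l, hl⟩, rfl⟩; exact ⟨l, hl, rfl⟩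
  rw [himg, finrank_span_eq_card hli, Fintype.card_coe]

private lemma exists_ne_zero_mem_inf {E : Type*} [NormedAddCommGroup E]
    [InnerProductSpace ℝ E] [FiniteDimensional ℝ E] (S T : Submodule ℝ E)
    (h : Module.finrank ℝ E < Module.finrank ℝ S + Module.finrank ℝ T) :
    ∃ v, v ∈ S ⊓ T ∧ v ≠ 0 := by
  have h2 := Submodule.finrank_sup_add_finrank_inf_eq S T
  have h3 : Module.finrank ℝ ↥(S ⊔ T) ≤ Module.finrank ℝ E := Submodule.finrank_le _
  have h1 : 0 < Module.finrank ℝ ↥(S ⊓ T) := by omega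
  have : Nontrivial ↥(S ⊓ T) := Module.nontrivial_of_finrank_pos h1
  obtain ⟨v, hv⟩ := exists_ne (0 : ↥(S ⊓ T))
  exact ⟨v.1, v.2, fun h => hv (Subtype.ext h)⟩

private lemma sorted_eig_le {A B : Matrix (Fin n) (Fin n) ℝ}
    (hA : A.IsHermitian) (hB : B.IsHermitian) {c : ℝ} (hc : 0 < c)
    (h : ∀ v : EuclideanSpace ℝ (Fin n),
      (inner ℝ v (Matrix.toEuclideanLin A v) : ℝ) ≤ c * (inner ℝ v (Matrix.toEuclideanLin B v) : ℝ))
    (j : Fin n) :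
    (hA.eigenvalues ∘ Tuple.sort hA.eigenvalues) j
      ≤ c * (hB.eigenvalues ∘ Tuple.sort hB.eigenvalues) j := by
  classical
  set σA := Tuple.sort hA.eigenvalues with hσA
  set σB := Tuple.sort hB.eigenvalues with hσB
  set sA : Finset (Fin n) := (Finset.Ici j).image σA with hsA
  set tB : Finset (Fin n) := (Finset.Iic j).image σB with htB
  have hcardA : sA.card = n - j := by
    rw [hsA, Finset.card_image_of_injective _ σA.injective, Fin.card_Ici]
  have hcardB : tB.card = j + 1 := by
    rw [htB, Finset.card_image_of_injective _ σB.injective, Fin.card_Iic]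
  have hdim : Module.finrank ℝ (EuclideanSpace ℝ (Fin n))
      < Module.finrank ℝ (Submodule.span ℝ (hA.eigenvectorBasis '' ↑sA))
        + Module.finrank ℝ (Submodule.span ℝ (hB.eigenvectorBasis '' ↑tB)) := by
    rw [finrank_span_orthonormal hA.eigenvectorBasis.orthonormal,
      finrank_span_orthonormal hB.eigenvectorBasis.orthonormal,
      hcardA, hcardB, finrank_euclideanSpace, Fintype.card_fin]
    have := j.isLt
    omega
  obtain ⟨v, hvmem, hvne⟩ := exists_ne_zero_mem_inf
      (Submodule.span ℝ (hA.eigenvectorBasis '' ↑sA))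
      (Submodule.span ℝ (hB.eigenvectorBasis '' ↑tB)) hdim
  have h1 : (hA.eigenvalues ∘ σA) j * (inner ℝ v v : ℝ)
      ≤ (inner ℝ v (Matrix.toEuclideanLin A v) : ℝ) := by
    refine quad_lower hA sA _ (fun m hm => ?_) hvmem.1
    obtain ⟨l, hl, rfl⟩ := Finset.mem_image.mp hm
    exact Tuple.monotone_sort hA.eigenvalues (Finset.mem_Ici.mp hl)
  have h2 : (inner ℝ v (Matrix.toEuclideanLin B v) : ℝ)
      ≤ (hB.eigenvalues ∘ σB) j * (inner ℝ v v : ℝ) := by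
    refine quad_upper hB tB _ (fun m hm => ?_) hvmem.2
    obtain ⟨l, hl, rfl⟩ := Finset.mem_image.mp hm
    exact Tuple.monotone_sort hB.eigenvalues (Finset.mem_Iic.mp hl)
  have hvv : (0:ℝ) < inner ℝ v v := by
    rw [real_inner_self_eq_norm_sq]
    exact pow_pos (norm_pos_iff.mpr hvne) 2
  have h3 := mul_le_mul_of_nonneg_left h2 hc.le
  have key : (hA.eigenvalues ∘ σA) j * (inner ℝ v v : ℝ)
      ≤ (c * (hB.eigenvalues ∘ σB) j) * (inner ℝ v v : ℝ) := by
    have h4 := h v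
    nlinarith
  exact le_of_mul_le_mul_right key hvv

private lemma gram_quad {X H : Type*} [NormedAddCommGroup H] [InnerProductSpace ℝ H]
    (Φ : X → H) (x : Fin n → X) (K : Matrix (Fin n) (Fin n) ℝ)
    (hK : ∀ i j, K i j = (inner ℝ (Φ (x i)) (Φ (x j)) : ℝ)) (v : EuclideanSpace ℝ (Fin n)) :
    (inner ℝ v (Matrix.toEuclideanLin K v) : ℝ) = ‖∑ i, v i • Φ (x i)‖ ^ 2 := by
  rw [← real_inner_self_eq_norm_sq, sum_inner]
  simp only [PiLp.inner_apply, RCLike.inner_apply, starRingEnd_apply, star_trivial,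
    Matrix.toEuclideanLin_apply, PiLp.toLp_apply,
    Matrix.mulVec, dotProduct, inner_sum, real_inner_smul_left, real_inner_smul_right]
  refine Finset.sum_congr rfl fun i _ => ?_
  rw [Finset.sum_mul]
  refine Finset.sum_congr rfl fun j _ => ?_
  rw [hK i j]; ring

end Aux

/-- The eigenvalues of a real symmetric matrix, sorted in descending order. -/
noncomputable def sortedEigs {n : ℕ} {K : Matrix (Fin n) (Fin n) ℝ}
    (hK : K.IsHermitian) : Fin n → ℝ :=
  fun i => (hK.eigenvalues ∘ Tuple.sort hK.eigenvalues) i.rev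

/-- Let `k` and `k̃` be kernels on a set `X` (realized by feature maps `Φ₁`, `Φ₂` into their
RKHSs `H₁`, `H₂`) whose RKHSs are equal as sets (witnessed by a linear equivalence `T`
preserving the realized functions) with `C`-equivalent norms,
`C⁻¹ ‖f‖_{H₁} ≤ ‖T f‖_{H₂} ≤ C ‖f‖_{H₁}`. Then for any points `x₁,…,xₙ`, the kernel
matrices are `C²`-equivalent: `C⁻² λ_i(K₁) ≤ λ_i(K₂) ≤ C² λ_i(K₁)` for all `i`. -/
theorem kernel_matrices_of_equivalent_rkhs_are_equivalent
    {X H1 H2 : Type*} [NormedAddCommGroup H1] [InnerProductSpace ℝ H1]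
    [NormedAddCommGroup H2] [InnerProductSpace ℝ H2]
    (Φ1 : X → H1) (Φ2 : X → H2)
    (T : H1 ≃ₗ[ℝ] H2)
    (hT : ∀ (f : H1) (x : X), (inner ℝ (T f) (Φ2 x) : ℝ) = (inner ℝ f (Φ1 x) : ℝ))
    (C : ℝ) (hC : 1 ≤ C)
    (hnorm : ∀ f : H1, C⁻¹ * ‖f‖ ≤ ‖T f‖ ∧ ‖T f‖ ≤ C * ‖f‖)
    (n : ℕ) (x : Fin n → X)
    (K1 K2 : Matrix (Fin n) (Fin n) ℝ)
    (hK1def : ∀ i j, K1 i j = (inner ℝ (Φ1 (x i)) (Φ1 (x j)) : ℝ))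
    (hK2def : ∀ i j, K2 i j = (inner ℝ (Φ2 (x i)) (Φ2 (x j)) : ℝ))
    (hK1 : K1.IsHermitian) (hK2 : K2.IsHermitian) :
    ∀ i, (C ^ 2)⁻¹ * sortedEigs hK1 i ≤ sortedEigs hK2 i ∧
      sortedEigs hK2 i ≤ C ^ 2 * sortedEigs hK1 i := by
  have hC0 : (0:ℝ) < C := lt_of_lt_of_le one_pos hC
  have hC2 : (0:ℝ) < C ^ 2 := by positivity
  have hdom : ∀ v : EuclideanSpace ℝ (Fin n),
      (inner ℝ v (Matrix.toEuclideanLin K2 v) : ℝ)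
        ≤ C ^ 2 * (inner ℝ v (Matrix.toEuclideanLin K1 v) : ℝ) ∧
      (inner ℝ v (Matrix.toEuclideanLin K1 v) : ℝ)
        ≤ C ^ 2 * (inner ℝ v (Matrix.toEuclideanLin K2 v) : ℝ) := by
    intro v
    set f := ∑ i, (v i) • Φ1 (x i) with hf
    set g := ∑ i, (v i) • Φ2 (x i) with hg
    have hkey : ∀ h : H1, (inner ℝ (T h) g : ℝ) = (inner ℝ h f : ℝ) := by
      intro h
      rw [hf, hg, inner_sum, inner_sum]
      exact Finset.sum_congr rfl fun i _ => by
        rw [real_inner_smul_right, real_inner_smul_right, hT]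
    have hfg : ‖f‖ ≤ C * ‖g‖ := by
      have h1 : ‖f‖ ^ 2 = (inner ℝ (T f) g : ℝ) := by
        rw [hkey, real_inner_self_eq_norm_sq]
      have h2 : (inner ℝ (T f) g : ℝ) ≤ ‖T f‖ * ‖g‖ := real_inner_le_norm _ _
      have h3 := (hnorm f).2
      rcases eq_or_lt_of_le (norm_nonneg f) with h0 | h0
      · rw [← h0]; positivity
      · nlinarith [norm_nonneg g]
    have hTsymm : ‖T.symm g‖ ≤ C * ‖g‖ := by
      have h4 := (hnorm (T.symm g)).1
      rw [T.apply_symm_apply] at h4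
      calc ‖T.symm g‖ = C * (C⁻¹ * ‖T.symm g‖) := by field_simp
        _ ≤ C * ‖g‖ := by nlinarith
    have hgf : ‖g‖ ≤ C * ‖f‖ := by
      have h1 : ‖g‖ ^ 2 = (inner ℝ (T.symm g) f : ℝ) := by
        rw [← hkey, T.apply_symm_apply, real_inner_self_eq_norm_sq]
      have h2 : (inner ℝ (T.symm g) f : ℝ) ≤ ‖T.symm g‖ * ‖f‖ := real_inner_le_norm _ _
      rcases eq_or_lt_of_le (norm_nonneg g) with h0 | h0
      · rw [← h0]; positivity
      · nlinarith [norm_nonneg f]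
    rw [gram_quad Φ1 x K1 hK1def v, gram_quad Φ2 x K2 hK2def v]
    constructor
    · nlinarith [norm_nonneg f, norm_nonneg g]
    · nlinarith [norm_nonneg f, norm_nonneg g]
  have h21 : ∀ j, (hK2.eigenvalues ∘ Tuple.sort hK2.eigenvalues) j
      ≤ C ^ 2 * (hK1.eigenvalues ∘ Tuple.sort hK1.eigenvalues) j :=
    fun j => sorted_eig_le hK2 hK1 hC2 (fun v => (hdom v).1) j
  have h12 : ∀ j, (hK1.eigenvalues ∘ Tuple.sort hK1.eigenvalues) j
      ≤ C ^ 2 * (hK2.eigenvalues ∘ Tuple.sort hK2.eigenvalues) j :=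
    fun j => sorted_eig_le hK1 hK2 hC2 (fun v => (hdom v).2) j
  intro i
  constructor
  · rw [sortedEigs, sortedEigs, inv_mul_le_iff₀ hC2]
    exact h12 i.rev
  · exact h21 i.rev
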